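/- There exists a universal constant c ∈ (0,∞) with the following property. Assume p ∈ [1,2), and fix q ∈ (p,2] and r, s ∈ [1,∞). Suppose (Y,‖·‖_Y) is a Banach space with S_q(Y) < ∞, and suppose f : 𝔽₂^m → Y satisfies ((1/4^m)·∑_{(x,y)∈𝔽₂^m×𝔽₂^m} ‖f(x)−f(y)‖_Y^r)^{1/r} = ((1/4^m)·∑_{(x,y)∈𝔽₂^m×𝔽₂^m} ‖x−y‖_{ℓ_p}^s)^{1/s}, where points of 𝔽₂^m are identified with {0,1}^m ⊂ ℝ^m and ‖x−y‖_{ℓ_p} = (∑_{i=1}^m |x_i−y_i|^p)^{1/p}. Then there exist x ∈ 𝔽₂^m and i ∈ {1,…,m} such that ‖f(x)−f(x+e_i)‖_Y ≥ c·m^{1/p − 1/q} / (r^{1/q} + S_q(Y)). -/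

import Mathlib

open scoped ENNReal

/-- `S` is a `q`-smoothness constant of the normed space `Y`:
`(‖x+y‖^q + ‖x-y‖^q)/2 ≤ ‖x‖^q + S^q·‖y‖^q` for all `x, y ∈ Y` (with `S ∈ [1,∞)`). -/
def IsSmoothConst (Y : Type*) [NormedAddCommGroup Y] (q S : ℝ) : Prop :=
  1 ≤ S ∧ ∀ x y : Y, (‖x + y‖ ^ q + ‖x - y‖ ^ q) / 2 ≤ ‖x‖ ^ q + S ^ q * ‖y‖ ^ q

/-- The `q`-smoothness constant `S_q(Y)` (the infimum of the `q`-smoothness constants). -/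
noncomputable def smoothConst (Y : Type*) [NormedAddCommGroup Y] (q : ℝ) : ℝ :=
  sInf {S : ℝ | IsSmoothConst Y q S}


section SmoothHelpers
open Real Finset
open scoped NNReal

lemma my_rpow_add_le {a b p : ℝ} (ha : 0 ≤ a) (hb : 0 ≤ b) (hp0 : 0 ≤ p) (hp1 : p ≤ 1) :
    (a + b) ^ p ≤ a ^ p + b ^ p := by
  have h := NNReal.coe_le_coe.2 (NNReal.rpow_add_le_add_rpow (a.toNNReal) (b.toNNReal) hp0 hp1)
  push_cast [NNReal.coe_rpow] at h
  rwa [Real.coe_toNNReal _ ha, Real.coe_toNNReal _ hb] at h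

lemma my_convex2 {A B q : ℝ} (hA : 0 ≤ A) (hB : 0 ≤ B) (hq : 1 ≤ q) :
    ((A + B) / 2) ^ q ≤ (A ^ q + B ^ q) / 2 := by
  have h := NNReal.coe_le_coe.2 (NNReal.rpow_arith_mean_le_arith_mean2_rpow (1/2) (1/2)
    (A.toNNReal) (B.toNNReal) (by rw [add_halves]) hq)
  push_cast [NNReal.coe_rpow] at h
  rw [Real.coe_toNNReal _ hA, Real.coe_toNNReal _ hB] at h
  calc ((A + B) / 2) ^ q = (1/2 * A + 1/2 * B) ^ q := by ring_nf
    _ ≤ 1/2 * A ^ q + 1/2 * B ^ q := h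
    _ = (A ^ q + B ^ q) / 2 := by ring

lemma my_exp_le {x : ℝ} (h0 : 0 ≤ x) (h1 : x ≤ 1) : Real.exp x ≤ 1 + 3 * x := by
  have h := convexOn_exp.2 (Set.mem_univ (0:ℝ)) (Set.mem_univ (1:ℝ))
    (by linarith : (0:ℝ) ≤ 1 - x) (by linarith : (0:ℝ) ≤ x) (by ring)
  simp only [smul_eq_mul, mul_zero, mul_one, zero_add, Real.exp_zero] at h
  have he : Real.exp 1 ≤ 3 := by
    have := Real.exp_one_lt_d9
    linarith
  nlinarith [Real.exp_pos (1:ℝ)]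

/-- Scalar smoothness: ((c+u)^ρ + (c-u)^ρ)/2 ≤ (c² + 3ρu²)^(ρ/2) for 0 ≤ u ≤ c, ρ ≥ 2. -/
lemma my_key_scalar {ρ c u : ℝ} (hρ : 2 ≤ ρ) (hu : 0 ≤ u) (huc : u ≤ c) :
    ((c + u) ^ ρ + (c - u) ^ ρ) / 2 ≤ (c ^ 2 + 3 * ρ * u ^ 2) ^ (ρ / 2) := by
  have hc : 0 ≤ c := hu.trans huc
  have hρ0 : (0:ℝ) < ρ := by linarith
  have hbase : 0 ≤ c ^ 2 + 3 * ρ * u ^ 2 := by positivity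
  rcases eq_or_lt_of_le hc with hc0 | hcpos
  · have hc0 : c = 0 := hc0.symm
    have hu0 : u = 0 := le_antisymm (hc0 ▸ huc) hu
    subst hc0; subst hu0
    simp only [add_zero, sub_zero, zero_add, mul_zero]
    have : (0:ℝ) ^ ρ = 0 := Real.zero_rpow hρ0.ne'
    rw [this]
    norm_num
    positivity
  rcases le_total (c ^ 2) (ρ * u ^ 2) with hcase | hcase
  · -- trivial branch
    have h1 : c + u ≤ 2 * c := by linarith
    have h2 : c - u ≤ 2 * c := by linarith
    have h2c : (0:ℝ) ≤ 2 * c := by linarith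
    have hb1 : (c + u) ^ ρ ≤ (2 * c) ^ ρ := Real.rpow_le_rpow (by linarith) h1 hρ0.le
    have hb2 : (c - u) ^ ρ ≤ (2 * c) ^ ρ := Real.rpow_le_rpow (by linarith) h2 hρ0.le
    have key : (2 * c) ^ ρ ≤ (c ^ 2 + 3 * ρ * u ^ 2) ^ (ρ / 2) := by
      have : (2 * c) ^ ρ = ((2 * c) ^ 2) ^ (ρ / 2) := by
        rw [← Real.rpow_natCast_mul h2c 2 (ρ / 2)]
        congr 1
        push_cast; ring
      rw [this]
      apply Real.rpow_le_rpow (by positivity) (by nlinarith) (by positivity)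
    linarith
  · -- exponential branch
    set t := u / c with ht
    have ht0 : 0 ≤ t := div_nonneg hu hc
    have ht1 : t ≤ 1 := (div_le_one hcpos).2 huc
    have hct : c * t = u := by rw [ht, mul_div_assoc']; exact mul_div_cancel_left₀ u hcpos.ne'
    have e1 : (c + u) ^ ρ ≤ c ^ ρ * Real.exp (ρ * t) := by
      have : c + u = c * (1 + t) := by rw [mul_add, mul_one, hct]
      rw [this, Real.mul_rpow hc (by linarith)]
      refine mul_le_mul_of_nonneg_left ?_ (Real.rpow_nonneg hc ρ)
      calc (1 + t) ^ ρ ≤ (Real.exp t) ^ ρ := by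
            apply Real.rpow_le_rpow (by linarith) _ hρ0.le
            linarith [Real.add_one_le_exp t]
        _ = Real.exp (t * ρ) := (Real.exp_mul t ρ).symm
        _ = Real.exp (ρ * t) := by rw [mul_comm]
    have e2 : (c - u) ^ ρ ≤ c ^ ρ * Real.exp (-(ρ * t)) := by
      have : c - u = c * (1 - t) := by rw [mul_sub, mul_one, hct]
      rw [this, Real.mul_rpow hc (by linarith)]
      refine mul_le_mul_of_nonneg_left ?_ (Real.rpow_nonneg hc ρ)
      calc (1 - t) ^ ρ ≤ (Real.exp (-t)) ^ ρ := by
            apply Real.rpow_le_rpow (by linarith) _ hρ0.le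
            linarith [Real.add_one_le_exp (-t)]
        _ = Real.exp (-t * ρ) := (Real.exp_mul (-t) ρ).symm
        _ = Real.exp (-(ρ * t)) := by ring_nf
    have hcosh : ((c + u) ^ ρ + (c - u) ^ ρ) / 2 ≤ c ^ ρ * Real.cosh (ρ * t) := by
      rw [Real.cosh_eq]
      calc ((c + u) ^ ρ + (c - u) ^ ρ) / 2
          ≤ (c ^ ρ * Real.exp (ρ * t) + c ^ ρ * Real.exp (-(ρ * t))) / 2 := by linarith
        _ = c ^ ρ * ((Real.exp (ρ * t) + Real.exp (-(ρ * t))) / 2) := by ring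
    have hch : Real.cosh (ρ * t) ≤ Real.exp ((ρ * t) ^ 2 / 2) := Real.cosh_le_exp_half_sq _
    have hrt : ρ * t ^ 2 ≤ 1 := by
      have : ρ * u ^ 2 ≤ c ^ 2 := hcase
      have hc2 : (0:ℝ) < c ^ 2 := by positivity
      rw [ht, div_pow, ← mul_div_assoc, div_le_one hc2]
      exact hcase
    have hrt0 : 0 ≤ ρ * t ^ 2 := by positivity
    have hsq : (ρ * t) ^ 2 / 2 = (ρ * t ^ 2) * (ρ / 2) := by ring
    have hexp : Real.exp ((ρ * t) ^ 2 / 2) = (Real.exp (ρ * t ^ 2)) ^ (ρ / 2) := by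
      rw [hsq, Real.exp_mul]
    have hfinal : c ^ ρ * Real.exp ((ρ * t) ^ 2 / 2)
        ≤ (c ^ 2 + 3 * ρ * u ^ 2) ^ (ρ / 2) := by
      rw [hexp]
      have hcρ : c ^ ρ = (c ^ 2 : ℝ) ^ (ρ / 2) := by
        rw [← Real.rpow_natCast_mul hc 2 (ρ / 2)]
        congr 1
        push_cast; ring
      rw [hcρ, ← Real.mul_rpow (by positivity) (Real.exp_pos _).le]
      apply Real.rpow_le_rpow (by positivity) _ (by positivity)
      have := my_exp_le hrt0 hrt
      have hexpand : c ^ 2 * (1 + 3 * (ρ * t ^ 2)) = c ^ 2 + 3 * ρ * u ^ 2 := by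
        have : c ^ 2 * t ^ 2 = u ^ 2 := by
          rw [← mul_pow, hct]
        nlinarith [this]
      nlinarith [sq_nonneg c, this]
    calc ((c + u) ^ ρ + (c - u) ^ ρ) / 2 ≤ c ^ ρ * Real.cosh (ρ * t) := hcosh
      _ ≤ c ^ ρ * Real.exp ((ρ * t) ^ 2 / 2) := by
          have : (0:ℝ) ≤ c ^ ρ := Real.rpow_nonneg hc ρ
          nlinarith
      _ ≤ (c ^ 2 + 3 * ρ * u ^ 2) ^ (ρ / 2) := hfinal

lemma my_step_vec {Y : Type*} [NormedAddCommGroup Y] {q S ρ : ℝ}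
    (hq1 : 1 ≤ q) (hq2 : q ≤ 2) (hρ : 2 ≤ ρ) (hS : IsSmoothConst Y q S) (x y : Y) :
    (‖x + y‖ ^ ρ + ‖x - y‖ ^ ρ) / 2 ≤ (‖x‖ ^ q + (S ^ q + 3 * ρ) * ‖y‖ ^ q) ^ (ρ / q) := by
  have hq0 : (0:ℝ) < q := by linarith
  have hρ0 : (0:ℝ) < ρ := by linarith
  set A := ‖x + y‖ with hA
  set B := ‖x - y‖ with hB
  have hA0 : 0 ≤ A := norm_nonneg _
  have hB0 : 0 ≤ B := norm_nonneg _
  set c := (A + B) / 2 with hc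
  set u := |A - B| / 2 with hu
  have hc0 : 0 ≤ c := by positivity
  have hu0 : 0 ≤ u := by positivity
  have huc : u ≤ c := by
    rw [hu, hc, div_le_div_iff_of_pos_right (by norm_num)]
    rcases abs_cases (A - B) with ⟨h, _⟩ | ⟨h, _⟩ <;> rw [h] <;> linarith
  -- the two norms are c ± u
  have hsum : A ^ ρ + B ^ ρ = (c + u) ^ ρ + (c - u) ^ ρ := by
    rcases le_total B A with h | h
    · rw [abs_of_nonneg (by linarith : 0 ≤ A - B)] at hu
      rw [hc, hu]; ring_nf
    · rw [abs_of_nonpos (by linarith : A - B ≤ 0)] at hu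
      rw [hc, hu]; ring_nf
  -- bound on u by ‖y‖
  have hub : u ≤ ‖y‖ := by
    rw [hu]
    have : |A - B| ≤ ‖(x + y) - (x - y)‖ := abs_norm_sub_norm_le _ _
    have h2 : (x + y) - (x - y) = y + y := by abel
    rw [h2] at this
    have h3 : ‖y + y‖ ≤ ‖y‖ + ‖y‖ := norm_add_le _ _
    linarith
  -- smoothness bound on c^q
  have hcq : c ^ q ≤ ‖x‖ ^ q + S ^ q * ‖y‖ ^ q := by
    calc c ^ q ≤ (A ^ q + B ^ q) / 2 := my_convex2 hA0 hB0 hq1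
      _ ≤ ‖x‖ ^ q + S ^ q * ‖y‖ ^ q := hS.2 x y
  -- main chain
  have h3ρ : (1:ℝ) ≤ 3 * ρ := by linarith
  have key := my_key_scalar hρ hu0 huc
  have inner : (c ^ 2 + 3 * ρ * u ^ 2) ^ (q / 2)
      ≤ ‖x‖ ^ q + (S ^ q + 3 * ρ) * ‖y‖ ^ q := by
    calc (c ^ 2 + 3 * ρ * u ^ 2) ^ (q / 2)
        ≤ (c ^ 2 : ℝ) ^ (q / 2) + (3 * ρ * u ^ 2 : ℝ) ^ (q / 2) :=
          my_rpow_add_le (by positivity) (by positivity) (by positivity) (by linarith)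
      _ = c ^ q + (3 * ρ) ^ (q / 2) * (u ^ 2 : ℝ) ^ (q / 2) := by
          rw [Real.mul_rpow (by linarith) (by positivity)]
          congr 1
          rw [← Real.rpow_natCast_mul hc0 2 (q / 2)]
          congr 1
          push_cast; ring
      _ ≤ c ^ q + (3 * ρ) * u ^ q := by
          have h1 : (3 * ρ) ^ (q / 2) ≤ (3 * ρ : ℝ) ^ (1:ℝ) :=
            Real.rpow_le_rpow_of_exponent_le h3ρ (by linarith)
          rw [Real.rpow_one] at h1
          have h2 : (u ^ 2 : ℝ) ^ (q / 2) = u ^ q := by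
            rw [← Real.rpow_natCast_mul hu0 2 (q / 2)]
            congr 1
            push_cast; ring
          rw [h2]
          have : (0:ℝ) ≤ u ^ q := Real.rpow_nonneg hu0 q
          nlinarith
      _ ≤ c ^ q + (3 * ρ) * ‖y‖ ^ q := by
          have : u ^ q ≤ ‖y‖ ^ q := Real.rpow_le_rpow hu0 hub hq0.le
          nlinarith
      _ ≤ ‖x‖ ^ q + (S ^ q + 3 * ρ) * ‖y‖ ^ q := by
          have : (0:ℝ) ≤ ‖y‖ ^ q := Real.rpow_nonneg (norm_nonneg _) q
          nlinarith
  calc (A ^ ρ + B ^ ρ) / 2 = ((c + u) ^ ρ + (c - u) ^ ρ) / 2 := by rw [hsum]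
    _ ≤ (c ^ 2 + 3 * ρ * u ^ 2) ^ (ρ / 2) := key
    _ = ((c ^ 2 + 3 * ρ * u ^ 2) ^ (q / 2)) ^ (ρ / q) := by
        rw [← Real.rpow_mul (by positivity)]
        congr 1
        field_simp
    _ ≤ (‖x‖ ^ q + (S ^ q + 3 * ρ) * ‖y‖ ^ q) ^ (ρ / q) :=
        Real.rpow_le_rpow (by positivity) inner (by positivity)

lemma my_minkowski {ι : Type*} [Fintype ι] (V : ι → ℝ) (hV : ∀ i, 0 ≤ V i)
    {C T β : ℝ} (hC : 0 ≤ C) (hT : 0 ≤ T) (hβ : 1 ≤ β)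
    (h : ∑ i, V i ^ β ≤ (Fintype.card ι : ℝ) * T ^ β) :
    ∑ i, (V i + C) ^ β ≤ (Fintype.card ι : ℝ) * (T + C) ^ β := by
  rcases isEmpty_or_nonempty ι with hι | hι
  · simp
  have hN : (0:ℝ) < (Fintype.card ι : ℝ) := by
    exact_mod_cast Fintype.card_pos
  have hβ0 : (0:ℝ) < β := by linarith
  set P := ∑ i, (V i + C) ^ β with hP
  have hP0 : 0 ≤ P := Finset.sum_nonneg fun i _ => Real.rpow_nonneg (by linarith [hV i]) β
  have hmink := Real.Lp_add_le_of_nonneg (f := V) (g := fun _ => C) (s := Finset.univ) hβ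
    (fun i _ => hV i) (fun i _ => hC)
  have hsum1 : (∑ i, V i ^ β) ^ (1/β) ≤ ((Fintype.card ι : ℝ) * T ^ β) ^ (1/β) :=
    Real.rpow_le_rpow (Finset.sum_nonneg fun i _ => Real.rpow_nonneg (hV i) β) h (by positivity)
  have hconst : (∑ _i : ι, C ^ β) = (Fintype.card ι : ℝ) * C ^ β := by
    rw [Finset.sum_const, nsmul_eq_mul, Finset.card_univ]
  have hTpow : ((Fintype.card ι : ℝ) * T ^ β) ^ (1/β) = (Fintype.card ι : ℝ) ^ (1/β) * T := by
    rw [Real.mul_rpow hN.le (Real.rpow_nonneg hT β), ← Real.rpow_mul hT]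
    rw [mul_one_div, div_self hβ0.ne', Real.rpow_one]
  have hCpow : ((Fintype.card ι : ℝ) * C ^ β) ^ (1/β) = (Fintype.card ι : ℝ) ^ (1/β) * C := by
    rw [Real.mul_rpow hN.le (Real.rpow_nonneg hC β), ← Real.rpow_mul hC]
    rw [mul_one_div, div_self hβ0.ne', Real.rpow_one]
  have hP1 : P ^ (1/β) ≤ (Fintype.card ι : ℝ) ^ (1/β) * (T + C) := by
    calc P ^ (1/β) ≤ (∑ i, V i ^ β) ^ (1/β) + (∑ _i : ι, C ^ β) ^ (1/β) := hmink
      _ ≤ (Fintype.card ι : ℝ) ^ (1/β) * T + (Fintype.card ι : ℝ) ^ (1/β) * C := by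
          rw [hconst] at *
          rw [hCpow]
          have := hsum1
          rw [hTpow] at this
          linarith
      _ = (Fintype.card ι : ℝ) ^ (1/β) * (T + C) := by ring
  calc P = (P ^ (1/β)) ^ β := by
        rw [← Real.rpow_mul hP0, one_div_mul_cancel hβ0.ne', Real.rpow_one]
    _ ≤ ((Fintype.card ι : ℝ) ^ (1/β) * (T + C)) ^ β := by
        apply Real.rpow_le_rpow (Real.rpow_nonneg hP0 _) hP1 hβ0.le
    _ = (Fintype.card ι : ℝ) * (T + C) ^ β := by
        rw [Real.mul_rpow (Real.rpow_nonneg hN.le _) (by linarith)]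
        rw [← Real.rpow_mul hN.le, one_div_mul_cancel hβ0.ne', Real.rpow_one]

lemma zmod2_sum {M : Type*} [AddCommMonoid M] (F : ZMod 2 → M) : ∑ ε : ZMod 2, F ε = F 0 + F 1 :=
  Fin.sum_univ_two F

lemma flip_zero {m : ℕ} (x' : Fin m → ZMod 2) :
    (fun j => Fin.cons (0 : ZMod 2) x' j + if j = (0 : Fin (m+1)) then 1 else 0)
      = Fin.cons (1 : ZMod 2) x' := by
  funext j
  refine Fin.cases ?_ (fun i => ?_) j
  · simp
  · simp [Fin.succ_ne_zero]

lemma flip_succ {m : ℕ} (ε : ZMod 2) (x' : Fin m → ZMod 2) (i : Fin m) :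
    Fin.cons (α := fun _ => ZMod 2) ε (fun j => x' j + if j = i then 1 else 0)
      = fun j => Fin.cons (α := fun _ => ZMod 2) ε x' j + if j = Fin.succ i then 1 else 0 := by
  funext j
  refine Fin.cases ?_ (fun k => ?_) j
  · simp [(Fin.succ_ne_zero i).symm, Ne.symm (Fin.succ_ne_zero i)]
  · simp [Fin.succ_inj]

lemma my_cube {Y : Type*} [NormedAddCommGroup Y] [NormedSpace ℝ Y] {q S ρ : ℝ}
    (hq1 : 1 ≤ q) (hq2 : q ≤ 2) (hρ : 2 ≤ ρ) (hS : IsSmoothConst Y q S) :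
    ∀ (m : ℕ) (L : ℝ) (_hL0 : 0 ≤ L) (f : (Fin m → ZMod 2) → Y)
      (_hLip : ∀ x (i : Fin m), ‖f x - f (fun j => x j + if j = i then 1 else 0)‖ ≤ L),
      ∑ x, ∑ y, ‖f x - f y‖ ^ ρ ≤
        (4:ℝ) ^ m * ((S ^ q + 3 * ρ) * m * L ^ q) ^ (ρ / q) := by
  have hq0 : (0:ℝ) < q := by linarith
  have hρ0 : (0:ℝ) < ρ := by linarith
  have hK0 : (0:ℝ) ≤ S ^ q + 3 * ρ := by
    have h1 : (0:ℝ) ≤ S ^ q := Real.rpow_nonneg (by linarith [hS.1] : (0:ℝ) ≤ S) q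
    linarith
  intro m
  induction m with
  | zero =>
    intro L hL0 f hLip
    have hz : ∀ x y : Fin 0 → ZMod 2, ‖f x - f y‖ ^ ρ = (0:ℝ) := by
      intro x y
      have : x = y := funext fun i => i.elim0
      rw [this, sub_self, norm_zero, Real.zero_rpow hρ0.ne']
    simp only [hz, Finset.sum_const_zero]
    positivity
  | succ m ih =>
    intro L hL0 f hLip
    set K := S ^ q + 3 * ρ with hK
    set β := ρ / q with hβdef
    have hβ1 : 1 ≤ β := by
      rw [hβdef, le_div_iff₀ hq0]; linarith
    set e : (ZMod 2 × (Fin m → ZMod 2)) ≃ (Fin (m+1) → ZMod 2) :=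
      Fin.consEquiv (fun _ => ZMod 2) with he
    have hecons : ∀ p : ZMod 2 × (Fin m → ZMod 2), e p = Fin.cons p.1 p.2 := fun _ => rfl
    set g : (Fin m → ZMod 2) → Y :=
      fun x' => (2⁻¹ : ℝ) • (f (Fin.cons 0 x') + f (Fin.cons 1 x')) with hg
    -- edges of f in coordinate 0 and succ directions
    have hedge0 : ∀ x' : Fin m → ZMod 2, ‖f (Fin.cons 0 x') - f (Fin.cons 1 x')‖ ≤ L := by
      intro x'
      have := hLip (Fin.cons 0 x') 0
      rwa [flip_zero x'] at this
    have hedgeS : ∀ (ε : ZMod 2) (x' : Fin m → ZMod 2) (i : Fin m),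
        ‖f (Fin.cons ε x') - f (Fin.cons ε (fun j => x' j + if j = i then 1 else 0))‖ ≤ L := by
      intro ε x' i
      have h := hLip (Fin.cons ε x') (Fin.succ i)
      rw [flip_succ ε x' i]
      exact h
    -- Lipschitz property of g
    have hgLip : ∀ x' (i : Fin m),
        ‖g x' - g (fun j => x' j + if j = i then 1 else 0)‖ ≤ L := by
      intro x' i
      set z := fun j => x' j + if j = i then 1 else 0 with hz
      have hid : g x' - g z = (2⁻¹ : ℝ) •
          ((f (Fin.cons 0 x') - f (Fin.cons 0 z)) + (f (Fin.cons 1 x') - f (Fin.cons 1 z))) := by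
        rw [hg]; module
      rw [hid, norm_smul]
      have h1 := hedgeS 0 x' i
      have h2 := hedgeS 1 x' i
      have t1 : ‖(f (Fin.cons 0 x') - f (Fin.cons 0 z)) + (f (Fin.cons 1 x') - f (Fin.cons 1 z))‖
          ≤ L + L := le_trans (norm_add_le _ _) (by rw [← hz] at h1 h2; exact add_le_add h1 h2)
      have : ‖(2⁻¹ : ℝ)‖ = (2⁻¹ : ℝ) := by norm_num
      rw [this]
      linarith
    -- pointwise four-term bound
    have hpt : ∀ x' y' : Fin m → ZMod 2,
        (∑ ε : ZMod 2, ∑ δ : ZMod 2, ‖f (Fin.cons ε x') - f (Fin.cons δ y')‖ ^ ρ)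
          ≤ 4 * (‖g x' - g y'‖ ^ q + K * L ^ q) ^ β := by
      intro x' y'
      set a0 := f (Fin.cons 0 x') with ha0
      set a1 := f (Fin.cons 1 x') with ha1
      set b0 := f (Fin.cons 0 y') with hb0
      set b1 := f (Fin.cons 1 y') with hb1
      set X := g x' - g y' with hX
      set y1 := (2⁻¹ : ℝ) • ((a0 - a1) + (b0 - b1)) with hy1
      set y2 := (2⁻¹ : ℝ) • ((a0 - a1) - (b0 - b1)) with hy2
      have hXy1p : X + y1 = a0 - b1 := by rw [hX, hy1, hg]; module
      have hXy1m : X - y1 = a1 - b0 := by rw [hX, hy1, hg]; module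
      have hXy2p : X + y2 = a0 - b0 := by rw [hX, hy2, hg]; module
      have hXy2m : X - y2 = a1 - b1 := by rw [hX, hy2, hg]; module
      have hny1 : ‖y1‖ ≤ L := by
        rw [hy1, norm_smul]
        have : ‖(2⁻¹ : ℝ)‖ = (2⁻¹ : ℝ) := by norm_num
        rw [this]
        have := le_trans (norm_add_le (a0 - a1) (b0 - b1))
          (add_le_add (hedge0 x') (hedge0 y'))
        linarith
      have hny2 : ‖y2‖ ≤ L := by
        rw [hy2, norm_smul]
        have h2 : ‖(2⁻¹ : ℝ)‖ = (2⁻¹ : ℝ) := by norm_num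
        rw [h2]
        have := le_trans (norm_sub_le (a0 - a1) (b0 - b1))
          (add_le_add (hedge0 x') (hedge0 y'))
        linarith
      have hbound : ∀ yv : Y, ‖yv‖ ≤ L →
          ‖X + yv‖ ^ ρ + ‖X - yv‖ ^ ρ ≤ 2 * (‖X‖ ^ q + K * L ^ q) ^ β := by
        intro yv hyv
        have h1 := my_step_vec hq1 hq2 hρ hS X yv
        have h2 : ‖X‖ ^ q + K * ‖yv‖ ^ q ≤ ‖X‖ ^ q + K * L ^ q := by
          have : ‖yv‖ ^ q ≤ L ^ q := Real.rpow_le_rpow (norm_nonneg _) hyv hq0.le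
          nlinarith
        have h3 : (‖X‖ ^ q + K * ‖yv‖ ^ q) ^ β ≤ (‖X‖ ^ q + K * L ^ q) ^ β := by
          apply Real.rpow_le_rpow _ h2 (by positivity)
          have : (0:ℝ) ≤ ‖X‖ ^ q := Real.rpow_nonneg (norm_nonneg _) q
          have : (0:ℝ) ≤ K * ‖yv‖ ^ q := mul_nonneg hK0 (Real.rpow_nonneg (norm_nonneg _) q)
          positivity
        rw [hK, hβdef] at *
        linarith [h1, h3]
      -- expand the double sum over ZMod 2 × ZMod 2
      rw [zmod2_sum (fun ε => ∑ δ : ZMod 2, ‖f (Fin.cons ε x') - f (Fin.cons δ y')‖ ^ ρ)]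
      rw [zmod2_sum (fun δ => ‖f (Fin.cons 0 x') - f (Fin.cons δ y')‖ ^ ρ)]
      rw [zmod2_sum (fun δ => ‖f (Fin.cons 1 x') - f (Fin.cons δ y')‖ ^ ρ)]
      have e1 : ‖a0 - b1‖ ^ ρ + ‖a1 - b0‖ ^ ρ ≤ 2 * (‖X‖ ^ q + K * L ^ q) ^ β := by
        have := hbound y1 hny1
        rwa [hXy1p, hXy1m] at this
      have e2 : ‖a0 - b0‖ ^ ρ + ‖a1 - b1‖ ^ ρ ≤ 2 * (‖X‖ ^ q + K * L ^ q) ^ β := by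
        have := hbound y2 hny2
        rwa [hXy2p, hXy2m] at this
      rw [← ha0, ← ha1, ← hb0, ← hb1]
      linarith
    -- reorganize the main sum
    have hA : (∑ x : Fin (m+1) → ZMod 2, ∑ y : Fin (m+1) → ZMod 2, ‖f x - f y‖ ^ ρ)
        = ∑ x' : Fin m → ZMod 2, ∑ y' : Fin m → ZMod 2,
            (∑ ε : ZMod 2, ∑ δ : ZMod 2, ‖f (Fin.cons ε x') - f (Fin.cons δ y')‖ ^ ρ) := by
      calc (∑ x : Fin (m+1) → ZMod 2, ∑ y : Fin (m+1) → ZMod 2, ‖f x - f y‖ ^ ρ)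
          = ∑ p : ZMod 2 × (Fin m → ZMod 2), ∑ y : Fin (m+1) → ZMod 2, ‖f (e p) - f y‖ ^ ρ :=
            (Equiv.sum_comp e _).symm
        _ = ∑ p : ZMod 2 × (Fin m → ZMod 2), ∑ p2 : ZMod 2 × (Fin m → ZMod 2),
              ‖f (e p) - f (e p2)‖ ^ ρ := by
            exact Finset.sum_congr rfl fun p _ => (Equiv.sum_comp e _).symm
        _ = ∑ ε : ZMod 2, ∑ x' : Fin m → ZMod 2, ∑ δ : ZMod 2, ∑ y' : Fin m → ZMod 2,
              ‖f (Fin.cons ε x') - f (Fin.cons δ y')‖ ^ ρ := by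
            simp only [hecons, Fintype.sum_prod_type]
        _ = ∑ ε : ZMod 2, ∑ x' : Fin m → ZMod 2, ∑ y' : Fin m → ZMod 2, ∑ δ : ZMod 2,
              ‖f (Fin.cons ε x') - f (Fin.cons δ y')‖ ^ ρ := by
            exact Finset.sum_congr rfl fun ε _ => Finset.sum_congr rfl fun x' _ =>
              Finset.sum_comm
        _ = ∑ x' : Fin m → ZMod 2, ∑ ε : ZMod 2, ∑ y' : Fin m → ZMod 2, ∑ δ : ZMod 2,
              ‖f (Fin.cons ε x') - f (Fin.cons δ y')‖ ^ ρ := Finset.sum_comm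
        _ = ∑ x' : Fin m → ZMod 2, ∑ y' : Fin m → ZMod 2, ∑ ε : ZMod 2, ∑ δ : ZMod 2,
              ‖f (Fin.cons ε x') - f (Fin.cons δ y')‖ ^ ρ := by
            exact Finset.sum_congr rfl fun x' _ => Finset.sum_comm
    rw [hA]
    -- apply the pointwise bound and Minkowski
    have hcard : (Fintype.card ((Fin m → ZMod 2) × (Fin m → ZMod 2)) : ℝ) = 4 ^ m := by
      rw [Fintype.card_prod, Fintype.card_fun, ZMod.card 2, Fintype.card_fin]
      push_cast
      rw [← mul_pow]
      norm_num
    have hIH : ∑ P : (Fin m → ZMod 2) × (Fin m → ZMod 2),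
        (‖g P.1 - g P.2‖ ^ q) ^ β
          ≤ (Fintype.card ((Fin m → ZMod 2) × (Fin m → ZMod 2)) : ℝ) * (K * m * L ^ q) ^ β := by
      have hrw : ∀ z : Y, (‖z‖ ^ q) ^ β = ‖z‖ ^ ρ := by
        intro z
        rw [← Real.rpow_mul (norm_nonneg _), hβdef, mul_div_cancel₀ _ hq0.ne']
      rw [hcard]
      calc ∑ P : (Fin m → ZMod 2) × (Fin m → ZMod 2), (‖g P.1 - g P.2‖ ^ q) ^ β
          = ∑ P : (Fin m → ZMod 2) × (Fin m → ZMod 2), ‖g P.1 - g P.2‖ ^ ρ := by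
            exact Finset.sum_congr rfl fun P _ => hrw _
        _ = ∑ x', ∑ y', ‖g x' - g y'‖ ^ ρ := by rw [Fintype.sum_prod_type]
        _ ≤ (4:ℝ) ^ m * (K * m * L ^ q) ^ (ρ / q) := ih L hL0 g hgLip
        _ = (4:ℝ) ^ m * (K * m * L ^ q) ^ β := by rw [hβdef]
    have hmink := my_minkowski (fun P : (Fin m → ZMod 2) × (Fin m → ZMod 2) =>
        ‖g P.1 - g P.2‖ ^ q)
      (fun P => Real.rpow_nonneg (norm_nonneg _) q)
      (mul_nonneg hK0 (Real.rpow_nonneg hL0 q))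
      (by positivity : (0:ℝ) ≤ K * m * L ^ q) hβ1 hIH
    rw [hcard] at hmink
    calc ∑ x' : Fin m → ZMod 2, ∑ y' : Fin m → ZMod 2,
          (∑ ε : ZMod 2, ∑ δ : ZMod 2, ‖f (Fin.cons ε x') - f (Fin.cons δ y')‖ ^ ρ)
        ≤ ∑ x' : Fin m → ZMod 2, ∑ y' : Fin m → ZMod 2,
            4 * (‖g x' - g y'‖ ^ q + K * L ^ q) ^ β := by
          exact Finset.sum_le_sum fun x' _ => Finset.sum_le_sum fun y' _ => hpt x' y'
      _ = 4 * ∑ P : (Fin m → ZMod 2) × (Fin m → ZMod 2),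
            (‖g P.1 - g P.2‖ ^ q + K * L ^ q) ^ β := by
          rw [Finset.mul_sum, Fintype.sum_prod_type]
      _ ≤ 4 * ((4:ℝ) ^ m * (K * m * L ^ q + K * L ^ q) ^ β) := by
          have h4 : (0:ℝ) ≤ 4 := by norm_num
          exact mul_le_mul_of_nonneg_left hmink h4
      _ = (4:ℝ) ^ (m+1) * (K * (m+1 : ℕ) * L ^ q) ^ β := by
          have : K * m * L ^ q + K * L ^ q = K * ((m:ℝ)+1) * L ^ q := by ring
          rw [this]
          have : ((m+1 : ℕ) : ℝ) = (m:ℝ) + 1 := by push_cast; ring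
          rw [this]
          ring
      _ = (4:ℝ) ^ (m+1) * (K * (m+1 : ℕ) * L ^ q) ^ (ρ / q) := by rw [hβdef]

lemma my_card_cube (m : ℕ) : (Fintype.card (Fin m → ZMod 2)) = 2 ^ m := by
  rw [Fintype.card_fun, ZMod.card 2, Fintype.card_fin]

lemma my_lower {m : ℕ} (hm : 0 < m) {p s : ℝ} (hp : 1 ≤ p) (hs : 1 ≤ s) :
    (m : ℝ) ^ (1/p) / 4 ≤
      ((∑ x : Fin m → ZMod 2, ∑ y : Fin m → ZMod 2,
          (∑ i, |((x i).val : ℝ) - ((y i).val : ℝ)| ^ p) ^ (s / p)) / 4 ^ m) ^ (1 / s) := by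
  have hp0 : (0:ℝ) < p := by linarith
  have hs0 : (0:ℝ) < s := by linarith
  set c1 : Fin m → ZMod 2 := fun _ => 1 with hc1
  set d : (Fin m → ZMod 2) → (Fin m → ZMod 2) → ℝ :=
    fun x y => ∑ i, |((x i).val : ℝ) - ((y i).val : ℝ)| ^ p with hd
  have hcoord : ∀ a b : ZMod 2,
      |((a.val : ℝ)) - (b.val : ℝ)| ^ p + |((a.val : ℝ)) - (((b + 1 : ZMod 2)).val : ℝ)| ^ p
        = 1 := by
    have h01 : ∀ a : ZMod 2, a = 0 ∨ a = 1 := by decide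
    have e00 : ((0:ZMod 2)).val = 0 := by decide
    have e11 : ((1:ZMod 2)).val = 1 := by decide
    have a01 : ((0:ZMod 2)+1) = 1 := by decide
    have a10 : ((1:ZMod 2)+1) = 0 := by decide
    intro a b
    rcases h01 a with ha | ha <;> rcases h01 b with hb | hb <;> subst ha <;> subst hb <;>
      simp only [a01, a10, e00, e11, Nat.cast_zero, Nat.cast_one] <;>
      norm_num [Real.zero_rpow hp0.ne', Real.one_rpow]
  have hpair : ∀ x y : Fin m → ZMod 2, d x y + d x (y + c1) = m := by
    intro x y
    rw [hd]
    simp only [← Finset.sum_add_distrib]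
    have : ∀ i ∈ Finset.univ, |((x i).val : ℝ) - ((y i).val : ℝ)| ^ p
        + |((x i).val : ℝ) - (((y + c1) i).val : ℝ)| ^ p = 1 := by
      intro i _
      have : (y + c1) i = y i + 1 := rfl
      rw [this]
      exact hcoord (x i) (y i)
    rw [Finset.sum_congr rfl this]
    simp
  have hd0 : ∀ x y, 0 ≤ d x y := by
    intro x y
    exact Finset.sum_nonneg fun i _ => Real.rpow_nonneg (abs_nonneg _) p
  set β := s / p with hβ
  have hβ0 : 0 ≤ β := by positivity
  have hptwise : ∀ x y : Fin m → ZMod 2,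
      ((m:ℝ)/2) ^ β ≤ d x y ^ β + d x (y + c1) ^ β := by
    intro x y
    have hsum := hpair x y
    rcases le_total ((m:ℝ)/2) (d x y) with h | h
    · have h1 : ((m:ℝ)/2) ^ β ≤ d x y ^ β := Real.rpow_le_rpow (by positivity) h hβ0
      have h2 : (0:ℝ) ≤ d x (y + c1) ^ β := Real.rpow_nonneg (hd0 _ _) β
      linarith
    · have h' : ((m:ℝ)/2) ≤ d x (y + c1) := by linarith
      have h1 : ((m:ℝ)/2) ^ β ≤ d x (y + c1) ^ β :=
        Real.rpow_le_rpow (by positivity) h' hβ0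
      have h2 : (0:ℝ) ≤ d x y ^ β := Real.rpow_nonneg (hd0 _ _) β
      linarith
  -- sum lower bound
  have hsumlow : ∀ x : Fin m → ZMod 2,
      (2:ℝ) ^ m / 2 * ((m:ℝ)/2) ^ β ≤ ∑ y, d x y ^ β := by
    intro x
    have hre : ∑ y : Fin m → ZMod 2, d x (y + c1) ^ β = ∑ y, d x y ^ β := by
      exact Fintype.sum_equiv (Equiv.addRight c1) _ _ fun y => rfl
    have h2 : (Fintype.card (Fin m → ZMod 2) : ℝ) * ((m:ℝ)/2) ^ β
        ≤ ∑ y, (d x y ^ β + d x (y + c1) ^ β) := by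
      rw [← Finset.card_univ, ← nsmul_eq_mul, ← Finset.sum_const]
      exact Finset.sum_le_sum fun y _ => hptwise x y
    rw [Finset.sum_add_distrib, hre] at h2
    rw [my_card_cube] at h2
    push_cast at h2 ⊢
    linarith
  have htotal : (4:ℝ) ^ m / 2 * ((m:ℝ)/2) ^ β
      ≤ ∑ x : Fin m → ZMod 2, ∑ y : Fin m → ZMod 2, d x y ^ β := by
    have h2 : (Fintype.card (Fin m → ZMod 2) : ℝ) * ((2:ℝ) ^ m / 2 * ((m:ℝ)/2) ^ β)
        ≤ ∑ x : Fin m → ZMod 2, ∑ y, d x y ^ β := by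
      rw [← Finset.card_univ, ← nsmul_eq_mul, ← Finset.sum_const]
      exact Finset.sum_le_sum fun x _ => hsumlow x
    rw [my_card_cube] at h2
    push_cast at h2 ⊢
    calc (4:ℝ) ^ m / 2 * ((m:ℝ)/2) ^ β = (2:ℝ)^m * ((2:ℝ)^m / 2 * ((m:ℝ)/2)^β) := by
          rw [show (4:ℝ) = 2 * 2 by norm_num, mul_pow]; ring
      _ ≤ _ := h2
  -- now the final computation
  have h4m : (0:ℝ) < 4 ^ m := by positivity
  have hdiv : ((m:ℝ)/2) ^ β / 2
      ≤ (∑ x : Fin m → ZMod 2, ∑ y : Fin m → ZMod 2, d x y ^ β) / 4 ^ m := by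
    rw [le_div_iff₀ h4m]
    calc ((m:ℝ)/2) ^ β / 2 * 4 ^ m = (4:ℝ) ^ m / 2 * ((m:ℝ)/2) ^ β := by ring
      _ ≤ _ := htotal
  have hmono : (((m:ℝ)/2) ^ β / 2) ^ (1/s)
      ≤ ((∑ x : Fin m → ZMod 2, ∑ y : Fin m → ZMod 2, d x y ^ β) / 4 ^ m) ^ (1/s) :=
    Real.rpow_le_rpow (by positivity) hdiv (by positivity)
  refine le_trans ?_ hmono
  -- (m/2)^(s/p) / 2) ^ (1/s) = (m/2)^(1/p) * 2^(-1/s) ≥ m^(1/p)/4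
  have hm0 : (0:ℝ) ≤ (m:ℝ)/2 := by positivity
  have heq : (((m:ℝ)/2) ^ β / 2) ^ (1/s)
      = ((m:ℝ)/2) ^ (1/p) * ((2:ℝ)⁻¹) ^ (1/s) := by
    rw [div_eq_mul_inv, Real.mul_rpow (Real.rpow_nonneg hm0 β) (by norm_num)]
    congr 1
    rw [← Real.rpow_mul hm0, hβ]
    congr 1
    field_simp
  rw [heq]
  have h1 : ((m:ℝ)/2) ^ (1/p) = (m:ℝ) ^ (1/p) * ((2:ℝ)⁻¹) ^ (1/p) := by
    rw [div_eq_mul_inv, Real.mul_rpow (by positivity) (by norm_num)]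
  rw [h1]
  have hhalf : ∀ t : ℝ, 0 < t → t ≤ 1 → (1:ℝ)/2 ≤ ((2:ℝ)⁻¹) ^ t := by
    intro t ht0 ht1
    have : ((2:ℝ)⁻¹) ^ t = ((2:ℝ) ^ t)⁻¹ := by
      rw [← Real.rpow_neg_one, ← Real.rpow_mul (by norm_num : (0:ℝ) ≤ 2)]
      rw [← Real.rpow_neg (by norm_num : (0:ℝ) ≤ 2)]
      congr 1
      ring
    rw [this]
    have h2t : (2:ℝ) ^ t ≤ 2 := by
      calc (2:ℝ) ^ t ≤ (2:ℝ) ^ (1:ℝ) := Real.rpow_le_rpow_of_exponent_le (by norm_num) ht1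
        _ = 2 := Real.rpow_one 2
    have h2t0 : (0:ℝ) < (2:ℝ) ^ t := Real.rpow_pos_of_pos (by norm_num) t
    rw [one_div]
    exact inv_anti₀ h2t0 h2t
  have hmp : (0:ℝ) ≤ (m:ℝ) ^ (1/p) := Real.rpow_nonneg (by positivity) _
  have ha := hhalf (1/p) (by positivity) (by rw [div_le_one hp0]; linarith)
  have hb := hhalf (1/s) (by positivity) (by rw [div_le_one hs0]; linarith)
  have hinv1 : (0:ℝ) ≤ ((2:ℝ)⁻¹) ^ (1/p) := Real.rpow_nonneg (by norm_num) _
  have hinv2 : (0:ℝ) ≤ ((2:ℝ)⁻¹) ^ (1/s) := Real.rpow_nonneg (by norm_num) _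
  calc (m:ℝ) ^ (1/p) / 4 = (m:ℝ) ^ (1/p) * (1/2) * (1/2) := by ring
    _ ≤ (m:ℝ) ^ (1/p) * ((2:ℝ)⁻¹) ^ (1/p) * ((2:ℝ)⁻¹) ^ (1/s) := by
        apply mul_le_mul _ hb (by norm_num) (by positivity)
        exact mul_le_mul_of_nonneg_left ha hmp

end SmoothHelpers

set_option maxHeartbeats 2000000 in
/-- **Lemma (uniformly smooth targets force large edges of the cube).**
There is a universal constant `c ∈ (0,∞)` with the following property.  Let `p ∈ [1,2)`,
`q ∈ (p,2]`, `r, s ∈ [1,∞)`.  Let `Y` be a Banach space with `S_q(Y) < ∞`, and suppose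
`f : 𝔽₂^m → Y` satisfies
`((1/4^m)∑_{x,y}‖f(x)-f(y)‖^r)^{1/r} = ((1/4^m)∑_{x,y}‖x-y‖_{ℓ_p}^s)^{1/s}`,
where `𝔽₂^m` is identified with `{0,1}^m ⊂ ℝ^m`.  Then there are `x ∈ 𝔽₂^m` and
`i ∈ {1,…,m}` with `‖f(x)-f(x+eᵢ)‖ ≥ c·m^{1/p-1/q}/(r^{1/q}+S_q(Y))`. -/
theorem smooth_target_large_edge :
    ∃ c : ℝ, 0 < c ∧
      ∀ (p q r s : ℝ), 1 ≤ p → p < 2 → p < q → q ≤ 2 → 1 ≤ r → 1 ≤ s →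
      ∀ (Y : Type*) [NormedAddCommGroup Y] [NormedSpace ℝ Y] [CompleteSpace Y],
        (∃ S : ℝ, IsSmoothConst Y q S) →
        ∀ (m : ℕ), 0 < m →
        ∀ f : (Fin m → ZMod 2) → Y,
          ((∑ x : Fin m → ZMod 2, ∑ y : Fin m → ZMod 2, ‖f x - f y‖ ^ r) / 4 ^ m) ^ (1 / r)
            = ((∑ x : Fin m → ZMod 2, ∑ y : Fin m → ZMod 2,
                (∑ i, |((x i).val : ℝ) - ((y i).val : ℝ)| ^ p) ^ (s / p)) / 4 ^ m) ^ (1 / s) →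
          ∃ (x : Fin m → ZMod 2) (i : Fin m),
            c * (m : ℝ) ^ (1 / p - 1 / q) / (r ^ (1 / q) + smoothConst Y q) ≤
              ‖f x - f (fun j => x j + if j = i then 1 else 0)‖ := by
  refine ⟨1/24, by norm_num, ?_⟩
  intro p q r s hp1 hp2 hpq hq2 hr1 hs1 Y _ _ _ hex m hm f heq
  have hq1 : 1 ≤ q := le_of_lt (lt_of_le_of_lt hp1 hpq)
  have hq0 : (0:ℝ) < q := by linarith
  have hr0 : (0:ℝ) < r := by linarith
  have hm0 : (0:ℝ) < m := by exact_mod_cast hm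
  -- maximal edge
  have hne : (Finset.univ : Finset ((Fin m → ZMod 2) × Fin m)).Nonempty := by
    have : Nonempty (Fin m) := ⟨⟨0, hm⟩⟩
    exact Finset.univ_nonempty
  obtain ⟨P₀, _, hmax⟩ := Finset.exists_max_image Finset.univ
    (fun P : (Fin m → ZMod 2) × Fin m =>
      ‖f P.1 - f (fun j => P.1 j + if j = P.2 then 1 else 0)‖) hne
  set L := ‖f P₀.1 - f (fun j => P₀.1 j + if j = P₀.2 then 1 else 0)‖ with hLdef
  have hL0 : 0 ≤ L := norm_nonneg _
  have hLip : ∀ x (i : Fin m), ‖f x - f (fun j => x j + if j = i then 1 else 0)‖ ≤ L :=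
    fun x i => hmax (x, i) (Finset.mem_univ _)
  refine ⟨P₀.1, P₀.2, ?_⟩
  set M := (m:ℝ) ^ (1/p - 1/q) with hM
  have hMpos : 0 < M := Real.rpow_pos_of_pos hm0 _
  set B := r ^ ((1:ℝ)/q) with hB
  have hBpos : (0:ℝ) < B := Real.rpow_pos_of_pos hr0 _
  have hB1 : (1:ℝ) ≤ B := Real.one_le_rpow hr1 (by positivity)
  -- the main estimate for any smoothness witness S
  have hmain : ∀ S : ℝ, IsSmoothConst Y q S → (1/24) * M / (B + S) ≤ L := by
    intro S hS
    have hS1 : 1 ≤ S := hS.1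
    set ρ := max r 2 with hρdef
    have hρ2 : (2:ℝ) ≤ ρ := le_max_right _ _
    have hρr : r ≤ ρ := le_max_left _ _
    have hρ0 : (0:ℝ) < ρ := by linarith
    set K := S ^ q + 3 * ρ with hK
    have hSq0 : (0:ℝ) ≤ S ^ q := Real.rpow_nonneg (by linarith) q
    have hK0 : (0:ℝ) < K := by rw [hK]; nlinarith
    -- cube lemma
    have hcube := my_cube hq1 hq2 hρ2 hS m L hL0 f hLip
    -- power mean comparison
    set P := ∑ x : Fin m → ZMod 2, ∑ y : Fin m → ZMod 2, ‖f x - f y‖ ^ r with hP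
    set Q := ∑ x : Fin m → ZMod 2, ∑ y : Fin m → ZMod 2, ‖f x - f y‖ ^ ρ with hQ
    have h4m : (0:ℝ) < 4 ^ m := by positivity
    have hQ0 : 0 ≤ Q := Finset.sum_nonneg fun x _ => Finset.sum_nonneg fun y _ =>
      Real.rpow_nonneg (norm_nonneg _) ρ
    have hcard : ((Fintype.card ((Fin m → ZMod 2) × (Fin m → ZMod 2))) : ℝ) = 4 ^ m := by
      rw [Fintype.card_prod, my_card_cube]
      push_cast
      rw [← mul_pow]
      norm_num
    have hPM : (P / 4 ^ m) ^ (1/r) ≤ (Q / 4 ^ m) ^ (1/ρ) := by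
      have hw : ∀ i ∈ (Finset.univ : Finset ((Fin m → ZMod 2) × (Fin m → ZMod 2))),
          (0:ℝ) ≤ (fun _ => ((4:ℝ) ^ m)⁻¹) i := fun i _ => by positivity
      have hw' : ∑ _i : (Fin m → ZMod 2) × (Fin m → ZMod 2), ((4:ℝ) ^ m)⁻¹ = 1 := by
        rw [Finset.sum_const, Finset.card_univ, nsmul_eq_mul, hcard]
        field_simp
      have hz : ∀ i ∈ (Finset.univ : Finset ((Fin m → ZMod 2) × (Fin m → ZMod 2))),
          (0:ℝ) ≤ ‖f i.1 - f i.2‖ ^ r := fun i _ => Real.rpow_nonneg (norm_nonneg _) r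
      have hρr1 : 1 ≤ ρ / r := by rw [le_div_iff₀ hr0]; linarith
      have key := Real.arith_mean_le_rpow_mean Finset.univ (fun _ => ((4:ℝ) ^ m)⁻¹)
        (fun i : (Fin m → ZMod 2) × (Fin m → ZMod 2) => ‖f i.1 - f i.2‖ ^ r)
        hw hw' hz hρr1
      have hzz : ∀ i : (Fin m → ZMod 2) × (Fin m → ZMod 2),
          (‖f i.1 - f i.2‖ ^ r) ^ (ρ / r) = ‖f i.1 - f i.2‖ ^ ρ := by
        intro i
        rw [← Real.rpow_mul (norm_nonneg _), mul_div_cancel₀ _ hr0.ne']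
      have hPsum : ∑ i : (Fin m → ZMod 2) × (Fin m → ZMod 2),
          ((4:ℝ) ^ m)⁻¹ * ‖f i.1 - f i.2‖ ^ r = P / 4 ^ m := by
        rw [← Finset.mul_sum, hP, div_eq_inv_mul]
        congr 1
        rw [Fintype.sum_prod_type]
      have hQsum : ∑ i : (Fin m → ZMod 2) × (Fin m → ZMod 2),
          ((4:ℝ) ^ m)⁻¹ * (‖f i.1 - f i.2‖ ^ r) ^ (ρ / r) = Q / 4 ^ m := by
        simp only [hzz]
        rw [← Finset.mul_sum, hQ, div_eq_inv_mul]
        congr 1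
        rw [Fintype.sum_prod_type]
      rw [hPsum, hQsum] at key
      calc (P / 4 ^ m) ^ (1/r) ≤ ((Q / 4 ^ m) ^ (r/ρ)) ^ (1/r) := by
            apply Real.rpow_le_rpow _ _ (by positivity)
            · apply div_nonneg _ h4m.le
              exact Finset.sum_nonneg fun x _ => Finset.sum_nonneg fun y _ =>
                Real.rpow_nonneg (norm_nonneg _) r
            · have : (1:ℝ)/(ρ/r) = r/ρ := by field_simp
              rw [← this]
              exact key
        _ = (Q / 4 ^ m) ^ (1/ρ) := by
            rw [← Real.rpow_mul (by positivity)]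
            congr 1
            field_simp
    -- bound (Q/4^m)^(1/ρ)
    have hQle : (Q / 4 ^ m) ^ (1/ρ) ≤ (K * m * L ^ q) ^ (1/q) := by
      have h1 : Q / 4 ^ m ≤ (K * m * L ^ q) ^ (ρ/q) := by
        rw [div_le_iff₀ h4m]
        calc Q ≤ (4:ℝ) ^ m * (K * m * L ^ q) ^ (ρ / q) := hcube
          _ = (K * m * L ^ q) ^ (ρ/q) * 4 ^ m := by ring
      calc (Q / 4 ^ m) ^ (1/ρ) ≤ ((K * m * L ^ q) ^ (ρ/q)) ^ (1/ρ) :=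
            Real.rpow_le_rpow (by positivity) h1 (by positivity)
        _ = (K * m * L ^ q) ^ (1/q) := by
            rw [← Real.rpow_mul (by positivity)]
            congr 1
            field_simp
    -- lower bound from hypothesis
    have hlow := my_lower hm hp1 hs1
    rw [← heq] at hlow
    -- combine
    have hcomb : (m:ℝ) ^ (1/p) / 4 ≤ K ^ (1/q) * (m:ℝ) ^ (1/q) * L := by
      have h2 : (K * m * L ^ q) ^ (1/q) = K ^ (1/q) * (m:ℝ) ^ (1/q) * L := by
        rw [Real.mul_rpow (by positivity) (Real.rpow_nonneg hL0 q),
          Real.mul_rpow hK0.le (by positivity)]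
        congr 1
        rw [← Real.rpow_mul hL0, mul_one_div, div_self hq0.ne', Real.rpow_one]
      calc (m:ℝ) ^ (1/p) / 4 ≤ (P / 4 ^ m) ^ (1/r) := hlow
        _ ≤ (Q / 4 ^ m) ^ (1/ρ) := hPM
        _ ≤ (K * m * L ^ q) ^ (1/q) := hQle
        _ = K ^ (1/q) * (m:ℝ) ^ (1/q) * L := h2
    -- estimate K^(1/q)
    have hKle : K ^ ((1:ℝ)/q) ≤ 6 * (B + S) := by
      have hρle : ρ ≤ 2 * r := by
        rw [hρdef]
        rcases le_total r 2 with h | h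
        · rw [max_eq_right h]; linarith
        · rw [max_eq_left h]; linarith
      have hKle2 : K ≤ S ^ q + 6 * r := by rw [hK]; linarith
      have hq1' : (0:ℝ) ≤ 1/q := by positivity
      have hq1'' : 1/q ≤ 1 := by rw [div_le_one hq0]; linarith
      calc K ^ ((1:ℝ)/q) ≤ (S ^ q + 6 * r) ^ ((1:ℝ)/q) :=
            Real.rpow_le_rpow hK0.le hKle2 hq1'
        _ ≤ (S ^ q) ^ ((1:ℝ)/q) + (6 * r) ^ ((1:ℝ)/q) :=
            my_rpow_add_le hSq0 (by linarith) hq1' hq1''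
        _ = S + 6 ^ ((1:ℝ)/q) * r ^ ((1:ℝ)/q) := by
            rw [Real.mul_rpow (by norm_num) (by linarith), ← Real.rpow_mul (by linarith),
              mul_one_div, div_self hq0.ne', Real.rpow_one]
        _ ≤ S + 6 * B := by
            rw [hB]
            have h6 : (6:ℝ) ^ ((1:ℝ)/q) ≤ 6 := by
              calc (6:ℝ) ^ ((1:ℝ)/q) ≤ (6:ℝ) ^ (1:ℝ) :=
                    Real.rpow_le_rpow_of_exponent_le (by norm_num) hq1''
                _ = 6 := Real.rpow_one 6
            have : (0:ℝ) ≤ r ^ ((1:ℝ)/q) := Real.rpow_nonneg hr0.le _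
            nlinarith
        _ ≤ 6 * (B + S) := by nlinarith
    -- finish
    have hKpos : (0:ℝ) < K ^ ((1:ℝ)/q) := Real.rpow_pos_of_pos hK0 _
    have hBS : (0:ℝ) < B + S := by linarith
    rw [div_le_iff₀ hBS]
    have hyp : (m:ℝ) ^ (1/p) / 4 ≤ 6 * (B + S) * (m:ℝ) ^ (1/q) * L := by
      have hmq : (0:ℝ) ≤ (m:ℝ) ^ ((1:ℝ)/q) := Real.rpow_nonneg hm0.le _
      calc (m:ℝ) ^ (1/p) / 4 ≤ K ^ (1/q) * (m:ℝ) ^ (1/q) * L := hcomb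
        _ ≤ 6 * (B + S) * (m:ℝ) ^ (1/q) * L := by
            apply mul_le_mul_of_nonneg_right _ hL0
            exact mul_le_mul_of_nonneg_right hKle hmq
    have hMs : M = (m:ℝ) ^ (1/p) / (m:ℝ) ^ (1/q) := by
      rw [hM, Real.rpow_sub hm0]
    have hmqpos : (0:ℝ) < (m:ℝ) ^ ((1:ℝ)/q) := Real.rpow_pos_of_pos hm0 _
    rw [hMs]
    have hgoal' : (1:ℝ)/24 * ((m:ℝ) ^ (1/p) / (m:ℝ) ^ (1/q))
        = ((m:ℝ) ^ (1/p) / 4) / (6 * (m:ℝ) ^ (1/q)) := by ring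
    rw [hgoal', div_le_iff₀ (by positivity)]
    calc (m:ℝ) ^ (1/p) / 4 ≤ 6 * (B + S) * (m:ℝ) ^ (1/q) * L := hyp
      _ = L * (B + S) * (6 * (m:ℝ) ^ (1/q)) := by ring
  -- pass to the infimum
  have hset : {S : ℝ | IsSmoothConst Y q S}.Nonempty := hex
  set σ := smoothConst Y q with hσ
  have hσ1 : 1 ≤ σ := le_csInf hset fun S hS => hS.1
  have hσS : ∀ S ∈ {S : ℝ | IsSmoothConst Y q S}, σ ≤ S := fun S hS =>
    csInf_le ⟨1, fun T hT => hT.1⟩ hS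
  have hBσ : (0:ℝ) < B + σ := by linarith
  rw [div_le_iff₀ hBσ]
  have hLpos : 0 < L := by
    obtain ⟨S₀, hS₀⟩ := hex
    have h := hmain S₀ hS₀
    have hBS₀ : (0:ℝ) < B + S₀ := by linarith [hS₀.1]
    by_contra hc
    push_neg at hc
    have hL0' : L = 0 := le_antisymm hc hL0
    rw [hL0'] at h
    have : (0:ℝ) < 1/24 * M / (B + S₀) := by positivity
    linarith
  apply le_of_forall_pos_le_add
  intro ε hε
  obtain ⟨S, hSmem, hSlt⟩ := exists_lt_of_csInf_lt hset
    (show sInf {S : ℝ | IsSmoothConst Y q S} < σ + ε / L by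
      have hσdef : sInf {S : ℝ | IsSmoothConst Y q S} = σ := rfl
      rw [hσdef]
      have : 0 < ε / L := by positivity
      linarith)
  have h := hmain S hSmem
  have hBS : (0:ℝ) < B + S := by linarith [hSmem.1]
  rw [div_le_iff₀ hBS] at h
  calc 1/24 * M ≤ L * (B + S) := h
    _ ≤ L * (B + (σ + ε / L)) := by
        apply mul_le_mul_of_nonneg_left _ hL0
        linarith
    _ = L * (B + σ) + ε := by
        field_simp
        ring
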